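/- arXiv:1909.12656 — 6 statements merged into one kernel-verified Lean document; each statement's English description precedes it below -/
import Mathlib

section
/- Let L be a finite lattice, S ⊆ L a subset containing the top of L, and let M = { meet of T : T ⊆ S, T nonempty } ∪ {top}. For any implication x → y on L: every element of S satisfies x → y if and only if every element of M satisfies x → y. -/
theorem stmt5 {L : Type*} [Lattice L] [Fintype L] [OrderTop L]
    (S : Set L) (htop : (⊤ : L) ∈ S) (x y : L) :
    let M : Set L := {z | ∃ T : Finset L, ↑T ⊆ S ∧ T.Nonempty ∧ z = T.inf id} ∪ {⊤}
    (∀ z ∈ S, x ≤ z → y ≤ z) ↔ (∀ z ∈ M, x ≤ z → y ≤ z) := by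
  intro M
  constructor
  · rintro h z (⟨T, hTS, hTne, rfl⟩ | hz)
    · intro hx
      exact Finset.le_inf fun t ht => h t (hTS ht) (le_trans hx (Finset.inf_le ht))
    · simp_all
  · intro h z hz hx
    exact h z (Or.inl ⟨{z}, by simpa using hz, Finset.singleton_nonempty z, by simp⟩) hx
end

section
/- Let n ≥ 3 and let L1, ..., Ln be finite lattices, and g : ∏ L_i → {0,1}^n componentwise via monotone maps h_i with h_i(bot)=0 and h_i(top)=1. Then g preserves binary meets if and only if for every meet-subsemilattice L' of ∏ L_i containing the top, the image g(L') is closed under componentwise meet in {0,1}^n. -/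
theorem stmt7 {n : ℕ} (hn : 3 ≤ n) {L : Fin n → Type*} [∀ i, Lattice (L i)]
    [∀ i, Fintype (L i)] [∀ i, BoundedOrder (L i)]
    (h : ∀ i, L i → Bool) (hmono : ∀ i, Monotone (h i))
    (hbot : ∀ i, h i ⊥ = false) (htop : ∀ i, h i ⊤ = true) :
    let g : (∀ i, L i) → (Fin n → Bool) := fun x i => h i (x i)
    (∀ x y, g (x ⊓ y) = g x ⊓ g y) ↔
      ∀ L' : Set (∀ i, L i), (∀ a ∈ L', ∀ b ∈ L', a ⊓ b ∈ L') → (⊤ : ∀ i, L i) ∈ L' →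
        ∀ u ∈ g '' L', ∀ v ∈ g '' L', u ⊓ v ∈ g '' L' := by
  intro g
  constructor
  · intro hpres L' hclosed htopmem u hu v hv
    obtain ⟨a, ha, rfl⟩ := hu
    obtain ⟨b, hb, rfl⟩ := hv
    exact ⟨a ⊓ b, hclosed a ha b hb, hpres a b⟩
  · intro H x y
    funext i
    by_contra hne
    -- so h i (x i ⊓ y i) = false, h i (x i) = true, h i (y i) = true
    have hxyi : h i (x i ⊓ y i) = false ∧ h i (x i) = true ∧ h i (y i) = true := by
      have m1 : h i (x i ⊓ y i) ≤ h i (x i) := hmono i inf_le_left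
      have m2 : h i (x i ⊓ y i) ≤ h i (y i) := hmono i inf_le_right
      revert hne m1 m2
      simp only [g, Pi.inf_apply]
      rcases h i (x i ⊓ y i) with _ | _ <;> rcases h i (x i) with _ | _ <;>
        rcases h i (y i) with _ | _ <;> simp [Bool.le_iff_imp]
    obtain ⟨hab, hax, hby⟩ := hxyi
    set a := x i
    set b := y i
    -- find two more coordinates
    have h2 : 1 < ((Finset.univ.erase i) : Finset (Fin n)).card := by
      rw [Finset.card_erase_of_mem (Finset.mem_univ _)]
      simp only [Finset.card_univ, Fintype.card_fin]
      omega
    obtain ⟨j, hj, k, hk, hjk⟩ := Finset.one_lt_card.mp h2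
    have hji : j ≠ i := (Finset.mem_erase.mp hj).1
    have hki : k ≠ i := (Finset.mem_erase.mp hk).1
    -- construct witnesses
    set X : ∀ m, L m := Function.update (Function.update (⊤ : ∀ m, L m) i a) j ⊥ with hX
    set Y : ∀ m, L m := Function.update (Function.update (⊤ : ∀ m, L m) i b) k ⊥ with hY
    set L' : Set (∀ m, L m) := {⊤, X, Y, X ⊓ Y} with hL'
    have hclosed : ∀ p ∈ L', ∀ q ∈ L', p ⊓ q ∈ L' := by
      rintro p (rfl | rfl | rfl | rfl) q (rfl | rfl | rfl | rfl) <;>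
        simp [hL', inf_comm, inf_assoc, inf_left_comm, inf_idem, Set.mem_insert_iff]
    have hXmem : X ∈ L' := by simp [hL']
    have hYmem : Y ∈ L' := by simp [hL']
    obtain ⟨z, hz, hgz⟩ := H L' hclosed (by simp [hL']) (g X) ⟨X, hXmem, rfl⟩
      (g Y) ⟨Y, hYmem, rfl⟩
    -- evaluate g at coordinates
    have gXi : g X i = true := by
      simp only [g, hX, Function.update_of_ne (Ne.symm hji) , Function.update_self]
      exact hax
    have gXj : g X j = false := by
      simp only [g, hX, Function.update_self]; exact hbot j
    have gXk : g X k = true := by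
      simp only [g, hX, Function.update_of_ne hjk.symm, Function.update_of_ne hki,
        Pi.top_apply]
      exact htop k
    have gYi : g Y i = true := by
      simp only [g, hY, Function.update_of_ne (Ne.symm hki), Function.update_self]
      exact hby
    have gYj : g Y j = true := by
      simp only [g, hY, Function.update_of_ne hjk, Function.update_of_ne hji,
        Pi.top_apply]
      exact htop j
    have gYk : g Y k = false := by
      simp only [g, hY, Function.update_self]; exact hbot k
    have huvi : (g X ⊓ g Y) i = true := by simp [gXi, gYi]
    have huvj : (g X ⊓ g Y) j = false := by simp [gXj]
    have huvk : (g X ⊓ g Y) k = false := by simp [gYk]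
    rcases hz with rfl | rfl | rfl | rfl
    · have := congrFun hgz j
      rw [huvj] at this
      simp [g, htop j] at this
    · have := congrFun hgz k
      rw [huvk, gXk] at this
      exact Bool.true_eq_false.mp this
    · have := congrFun hgz j
      rw [huvj, gYj] at this
      exact Bool.true_eq_false.mp this
    · have := congrFun hgz i
      rw [huvi] at this
      have : h i (X i ⊓ Y i) = true := this
      rw [show X i = a by simp [hX, Function.update_of_ne (Ne.symm hji), Function.update_self],
        show Y i = b by simp [hY, Function.update_of_ne (Ne.symm hki), Function.update_self]]
        at this
      rw [hab] at this
      exact Bool.false_eq_true.mp this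
end

section
/- Let L be a finite lattice. An element p ∈ L is prime if y ∧ z ≤ p implies y ≤ p or z ≤ p; an element c is co-prime if c ≤ y ∨ z implies c ≤ y or c ≤ z. If p is a prime element of L, then the set {x ∈ L : x ≰ p} has a unique minimum element c, and this c is co-prime. -/
theorem stmt8 {L : Type*} [Lattice L] [Fintype L] [BoundedOrder L]
    (p : L) (hp : ∀ y z : L, y ⊓ z ≤ p → y ≤ p ∨ z ≤ p) (hptop : p ≠ ⊤) :
    ∃! c : L, ¬ c ≤ p ∧ (∀ x : L, ¬ x ≤ p → c ≤ x) ∧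
      (∀ y z : L, c ≤ y ⊔ z → c ≤ y ∨ c ≤ z) := by
  classical
  have key : ∀ s : Finset L, (∀ x ∈ s, ¬ x ≤ p) → ¬ s.inf id ≤ p := by
    intro s
    induction s using Finset.induction_on with
    | empty =>
      intro _ h
      simp only [Finset.inf_empty] at h
      exact hptop (le_antisymm le_top h)
    | insert _ _ hx ih =>
      intro hall hle
      rw [Finset.inf_insert] at hle
      rcases hp _ _ hle with h | h
      · exact hall _ (Finset.mem_insert_self _ _) h
      · exact ih (fun x hx => hall x (Finset.mem_insert_of_mem hx)) h
  set S := Finset.univ.filter (fun x : L => ¬ x ≤ p) with hS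
  set c := S.inf id with hc
  have hcp : ¬ c ≤ p := key S (by intro x hx; simpa [hS] using hx)
  have hmin : ∀ x : L, ¬ x ≤ p → c ≤ x := by
    intro x hx
    exact Finset.inf_le (by simp [hS, hx])
  refine ⟨c, ⟨hcp, hmin, ?_⟩, ?_⟩
  · intro y z hyz
    by_contra h
    push_neg at h
    have hy : y ≤ p := by by_contra hy; exact h.1 (hmin y hy)
    have hz : z ≤ p := by by_contra hz; exact h.2 (hmin z hz)
    exact hcp (hyz.trans (sup_le hy hz))
  · rintro d ⟨hdp, hdmin, -⟩
    exact le_antisymm (hdmin c hcp) (hmin d hdp)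
end

section
/- Let L be a finite product lattice ∏_{i=1}^n L_i, let L' be a meet-subsemilattice of L containing the top, and let g : L → {0,1}^n be a componentwise monotone meet-preserving map (a reality) with componentwise thresholds: there exists x_g ∈ L with g(z)_i = 1 iff z_i ≥ (x_g)_i, and each (x_g)_i ≠ bot. Define the projection π_g(x) componentwise by π_g(x)_i = (x_g)_i if x_i ≥ (x_g)_i and bot otherwise. Then g(cl(π_g(x))) = cl'(g(π_g(x))) = cl'(g(x)), where cl is the closure operator induced by L' on L and cl' is the closure operator induced by g(L') on {0,1}^n. -/
open scoped Classical in
theorem stmt13 {n : ℕ} {L : Fin n → Type*} [∀ i, Lattice (L i)] [∀ i, Fintype (L i)]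
    [∀ i, BoundedOrder (L i)]
    (L' : Set (∀ i, L i)) (hmeet : ∀ a ∈ L', ∀ b ∈ L', a ⊓ b ∈ L')
    (htop : (⊤ : ∀ i, L i) ∈ L')
    (xg : ∀ i, L i) (hxg : ∀ i, xg i ≠ ⊥) (x : ∀ i, L i) :
    let g : (∀ i, L i) → (Fin n → Bool) := fun z i => if xg i ≤ z i then true else false
    let pi : (∀ i, L i) → (∀ i, L i) := fun z i => if xg i ≤ z i then xg i else ⊥
    let cl : (∀ i, L i) → (∀ i, L i) :=
      fun z => (Finset.univ.filter fun y => y ∈ L' ∧ z ≤ y).inf id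
    let cl' : (Fin n → Bool) → (Fin n → Bool) :=
      fun F => (Finset.univ.filter fun G => G ∈ g '' L' ∧ F ≤ G).inf id
    g (cl (pi x)) = cl' (g (pi x)) ∧ g (cl (pi x)) = cl' (g x) := by
  intro g pi cl cl'
  have hgi : ∀ (z : ∀ i, L i) (i : Fin n), g z i = true ↔ xg i ≤ z i := by
    intro z i
    simp only [g]
    split <;> simp [*]
  have hgpi : g (pi x) = g x := by
    funext i
    simp only [g, pi]
    by_cases h : xg i ≤ x i
    · simp [h]
    · have hb : ¬ xg i ≤ (⊥ : L i) := by simp [le_bot_iff, hxg i]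
      simp [h, hb]
  have hle : ∀ y : ∀ i, L i, pi x ≤ y ↔ g x ≤ g y := by
    intro y
    constructor
    · intro h i
      by_cases hx : xg i ≤ x i
      · have h2 := h i
        simp only [pi, hx, if_true] at h2
        simp [g, hx, h2]
      · simp [g, hx]
    · intro h i
      simp only [pi]
      by_cases hx : xg i ≤ x i
      · rw [if_pos hx]
        have h2 := h i
        have hxt : g x i = true := (hgi x i).mpr hx
        rw [hxt] at h2
        have : g y i = true := by
          cases hyy : g y i
          · rw [hyy] at h2; exact Bool.le_iff_imp.mp h2 rfl
          · rfl
        exact (hgi y i).mp this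
      · simp [hx]
  have key : g (cl (pi x)) = cl' (g x) := by
    funext i
    have hL : g (cl (pi x)) i = true ↔ ∀ y ∈ L', pi x ≤ y → xg i ≤ y i := by
      rw [hgi]
      simp only [cl, Finset.inf_apply, Finset.le_inf_iff, Finset.mem_filter,
        Finset.mem_univ, true_and, id]
      constructor
      · intro h y hy hxy; exact h y ⟨hy, hxy⟩
      · rintro h y ⟨hy, hxy⟩; exact h y hy hxy
    have hR : cl' (g x) i = true ↔ ∀ G, G ∈ g '' L' → g x ≤ G → G i = true := by
      simp only [cl', Finset.inf_apply]
      rw [show (true : Bool) = ⊤ from rfl, Finset.inf_eq_top_iff]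
      constructor
      · intro h G hG hxG
        exact h G (Finset.mem_filter.mpr ⟨Finset.mem_univ _, hG, hxG⟩)
      · intro h G hG
        obtain ⟨-, h1, h2⟩ := Finset.mem_filter.mp hG
        exact h G h1 h2
    have hiff : g (cl (pi x)) i = true ↔ cl' (g x) i = true := by
      rw [hL, hR]
      constructor
      · rintro h G ⟨y, hy, rfl⟩ hxG
        exact (hgi y i).mpr (h y hy ((hle y).mpr hxG))
      · intro h y hy hxy
        exact (hgi y i).mp (h (g y) ⟨y, hy, rfl⟩ ((hle y).mp hxy))
    cases hgc : g (cl (pi x)) i <;> cases hcc : cl' (g x) i <;> simp_all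
  exact ⟨by rw [key, hgpi], key⟩
end

section
/- With the setup of the projection lemma (L' a meet-subsemilattice containing top, g a threshold reality with threshold vector x_g, π_g the projection), for any x, y ∈ L: every z ∈ L' satisfies 'g(x) ≤ g(z) implies g(y) ≤ g(z)' if and only if every z ∈ L' satisfies 'π_g(x) ≤ z implies π_g(y) ≤ z'. -/
open scoped Classical in
theorem stmt14 {n : ℕ} {L : Fin n → Type*} [∀ i, Lattice (L i)] [∀ i, Fintype (L i)]
    [∀ i, BoundedOrder (L i)]
    (L' : Set (∀ i, L i)) (hmeet : ∀ a ∈ L', ∀ b ∈ L', a ⊓ b ∈ L')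
    (htop : (⊤ : ∀ i, L i) ∈ L')
    (xg : ∀ i, L i) (hxg : ∀ i, xg i ≠ ⊥) (x y : ∀ i, L i) :
    let g : (∀ i, L i) → (Fin n → Bool) := fun z i => if xg i ≤ z i then true else false
    let pi : (∀ i, L i) → (∀ i, L i) := fun z i => if xg i ≤ z i then xg i else ⊥
    (∀ z ∈ L', g x ≤ g z → g y ≤ g z) ↔ (∀ z ∈ L', pi x ≤ z → pi y ≤ z) := by
  intro g pi
  have key : ∀ a z : ∀ i, L i, g a ≤ g z ↔ pi a ≤ z := by
    intro a z
    have base : ∀ a z : ∀ i, L i, (∀ i, xg i ≤ a i → xg i ≤ z i) ↔ pi a ≤ z := by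
      intro a z
      constructor
      · intro h i
        simp only [pi]
        split_ifs with h1
        · exact h i h1
        · exact bot_le
      · intro h i h1
        have hi := h i
        simp only [pi, if_pos h1] at hi
        exact hi
    rw [← base]
    constructor
    · intro h i h1
      have hi := h i
      simp only [g, if_pos h1] at hi
      by_contra hc
      rw [if_neg hc] at hi
      exact absurd hi (show ¬(true ≤ false) by decide)
    · intro h i
      simp only [g]
      split_ifs with h1 h2
      · exact le_refl _
      · exact absurd (h i h1) h2
      · exact Bool.false_le _
      · exact le_refl _
  constructor
  · intro H z hz hle
    exact (key y z).mp (H z hz ((key x z).mpr hle))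
  · intro H z hz hle
    exact (key y z).mpr (H z hz ((key x z).mp hle))
end

section
/- Let L = ∏_{i=1}^n L_i be a finite product lattice, L' a meet-subsemilattice containing the top, and x, y ∈ L such that L' satisfies the implication x → y (every z ∈ L' with x ≤ z also has y ≤ z). Suppose g is the threshold reality whose threshold vector x_g satisfies (x_g)_i = x_i whenever x_i ≠ bot (and arbitrary nonbottom values elsewhere), so that π_g(x) = x. Then g(L') satisfies the implication g(x) → g(y): every F ∈ g(L') with g(x) ≤ F also satisfies g(y) ≤ F. -/
open scoped Classical in
theorem stmt15 {n : ℕ} {L : Fin n → Type*} [∀ i, Lattice (L i)] [∀ i, Fintype (L i)]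
    [∀ i, BoundedOrder (L i)]
    (L' : Set (∀ i, L i)) (hmeet : ∀ a ∈ L', ∀ b ∈ L', a ⊓ b ∈ L')
    (htop : (⊤ : ∀ i, L i) ∈ L')
    (x y : ∀ i, L i) (hsat : ∀ z ∈ L', x ≤ z → y ≤ z)
    (xg : ∀ i, L i) (hxg : ∀ i, xg i ≠ ⊥) (hxgx : ∀ i, x i ≠ ⊥ → xg i = x i) :
    let g : (∀ i, L i) → (Fin n → Bool) := fun z i => if xg i ≤ z i then true else false
    ∀ F ∈ g '' L', g x ≤ F → g y ≤ F := by
  intro g F hF hgx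
  obtain ⟨z, hz, rfl⟩ := hF
  have hxz : x ≤ z := by
    intro i
    by_cases hxi : x i = ⊥
    · simp [hxi]
    · have hxgi : xg i = x i := hxgx i hxi
      have hgxi : g x i = true := by simp [g, hxgi]
      have := hgx i
      rw [hgxi] at this
      have hle : xg i ≤ z i := by
        by_contra h
        simp [g, h] at this; exact absurd this (by simp)
      rw [hxgi] at hle
      exact hle
  have hyz : y ≤ z := hsat z hz hxz
  intro i
  by_cases h : xg i ≤ y i
  · have : xg i ≤ z i := le_trans h (hyz i)
    simp [g, h, this]
  · simp [g, h]
end
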